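/- arXiv:2101.00424 — 4 statements merged into one kernel-verified Lean document; each statement's English description precedes it below -/
import Mathlib

section
/- For every real q ≥ 3 and every u ∈ (0, 1), one has 1 - 2q·u^{q-1} + (3q - 1)·u^q - q·u^{q+1} > 0. -/
open Real Set

theorem stmt4 (q u : ℝ) (hq : 3 ≤ q) (hu : u ∈ Set.Ioo (0 : ℝ) 1) :
    0 < 1 - 2 * q * u ^ (q - 1) + (3 * q - 1) * u ^ q - q * u ^ (q + 1) := by
  obtain ⟨hu0, hu1⟩ := hu
  set F : ℝ → ℝ := fun x => 1 - x ^ q - q * x ^ (q - 1) * (x ^ 2 - 3 * x + 2) with hF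
  have hderiv : ∀ x ∈ Ioo u 1, HasDerivAt F
      (-(q * x ^ (q - 2)) * ((q + 1) * x ^ 2 - (3 * q - 1) * x + (2 * q - 2))) x := by
    intro x hx
    have hx0 : (0 : ℝ) < x := lt_trans hu0 hx.1
    have h1 : HasDerivAt (fun x : ℝ => x ^ q) (q * x ^ (q - 1)) x :=
      Real.hasDerivAt_rpow_const (Or.inl hx0.ne')
    have h2 : HasDerivAt (fun x : ℝ => x ^ (q - 1)) ((q - 1) * x ^ (q - 1 - 1)) x :=
      Real.hasDerivAt_rpow_const (Or.inl hx0.ne')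
    have h3 : HasDerivAt (fun x : ℝ => x ^ 2 - 3 * x + 2) (2 * x - 3) x := by
      simpa using (((hasDerivAt_pow 2 x).sub ((hasDerivAt_id x).const_mul 3)).add_const (2:ℝ))
    have h4 := ((h2.const_mul q).mul h3)
    have h5 := ((hasDerivAt_const x (1 : ℝ)).sub h1).sub h4
    convert h5 using 1
    · rfl
    · rfl
    · rfl
    have e1 : x ^ (q - 1) = x ^ (q - 2) * x := by
      have h := Real.rpow_add hx0 (q - 2) 1
      rw [Real.rpow_one] at h
      rw [show q - 2 + 1 = q - 1 by ring] at h
      exact h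
    have e2 : x ^ (q - 1 - 1) = x ^ (q - 2) := by ring_nf
    rw [e2, e1]
    ring
  have hcont : ContinuousOn F (Icc u 1) := by
    intro x hx
    have hx0 : (0 : ℝ) < x := lt_of_lt_of_le hu0 hx.1
    have c1 : ContinuousAt (fun x : ℝ => x ^ q) x :=
      Real.continuousAt_rpow_const x q (Or.inl hx0.ne')
    have c2 : ContinuousAt (fun x : ℝ => x ^ (q - 1)) x :=
      Real.continuousAt_rpow_const x (q - 1) (Or.inl hx0.ne')
    exact (((continuousAt_const.sub c1).sub
      ((c2.const_mul q).mul (by continuity : Continuous fun x : ℝ => x ^ 2 - 3 * x + 2).continuousAt)).continuousWithinAt)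
  have hanti : StrictAntiOn F (Icc u 1) := by
    apply strictAntiOn_of_deriv_neg (convex_Icc u 1) hcont
    intro x hx
    rw [interior_Icc] at hx
    rw [(hderiv x hx).deriv]
    have hx0 : (0 : ℝ) < x := lt_trans hu0 hx.1
    have hx1 : x < 1 := hx.2
    have hp : 0 < (q + 1) * x ^ 2 - (3 * q - 1) * x + (2 * q - 2) := by
      nlinarith [mul_pos (sub_pos.mpr hx1) (show (0:ℝ) < (2*q - 2) - (q+1)*x by nlinarith)]
    have hq2 : (0 : ℝ) < x ^ (q - 2) := Real.rpow_pos_of_pos hx0 _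
    have hq0 : (0 : ℝ) < q := by linarith
    nlinarith [mul_pos (mul_pos hq0 hq2) hp]
  have hF1 : F 1 = 0 := by
    simp only [hF, Real.one_rpow]
    norm_num
  have hFu : 0 < F u := by
    have := hanti ⟨le_rfl, hu1.le⟩ ⟨hu1.le, le_rfl⟩ hu1
    rwa [hF1] at this
  have e1 : u ^ q = u ^ (q - 1) * u := by
    have h := Real.rpow_add hu0 (q - 1) 1
    rw [Real.rpow_one] at h
    rw [show q - 1 + 1 = q by ring] at h
    exact h
  have e2 : u ^ (q + 1) = u ^ (q - 1) * u * u := by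
    have h := Real.rpow_add hu0 (q - 1) 2
    rw [show q - 1 + 2 = q + 1 by ring, show (2:ℝ) = ((2:ℕ):ℝ) by norm_num,
      Real.rpow_natCast] at h
    rw [h]; ring
  have : F u = 1 - 2 * q * u ^ (q - 1) + (3 * q - 1) * u ^ q - q * u ^ (q + 1) := by
    simp only [hF, e1, e2]
    ring
  linarith [hFu, this.symm.le]
end

section
/- Let A be a k×k Hermitian positive semidefinite matrix whose ℓ^p norm of diagonal entries equals its Schatten p-norm for some 1 < p < ∞, i.e. ‖d(A)‖_p = ‖A‖_p. Then A is diagonal. -/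
open Matrix ComplexOrder

theorem stmt11 {k : ℕ} (A : Matrix (Fin k) (Fin k) ℂ) (hA : A.PosSemidef)
    (p : ℝ) (hp : 1 < p)
    (heq : (∑ i, (A i i).re ^ p) ^ (1 / p) =
      (∑ i, (hA.1.eigenvalues i) ^ p) ^ (1 / p)) :
    A.IsDiag := by
  classical
  set U : Matrix (Fin k) (Fin k) ℂ := (hA.1.eigenvectorUnitary : Matrix (Fin k) (Fin k) ℂ) with hUdef
  set lam : Fin k → ℝ := hA.1.eigenvalues with hlamdef
  set w : Fin k → Fin k → ℝ := fun i j => Complex.normSq (U i j) with hwdef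
  have hlam0 : ∀ j, 0 ≤ lam j := fun j => hA.eigenvalues_nonneg j
  have hUU : U * star U = 1 := Matrix.mem_unitaryGroup_iff.mp (hA.1.eigenvectorUnitary).2
  have hUU' : star U * U = 1 := Matrix.mem_unitaryGroup_iff'.mp (hA.1.eigenvectorUnitary).2
  -- row sums of w are 1
  have hrow : ∀ i, ∑ j, w i j = 1 := by
    intro i
    have h := congrArg (fun M => M i i) hUU
    simp only [Matrix.mul_apply, Matrix.star_apply, Matrix.one_apply_eq] at h
    have : ((∑ j, w i j : ℝ) : ℂ) = 1 := by
      rw [← h]; push_cast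
      exact Finset.sum_congr rfl fun j _ => (Complex.mul_conj (U i j)).symm
    exact_mod_cast this
  -- column sums of w are 1
  have hcol : ∀ j, ∑ i, w i j = 1 := by
    intro j
    have h := congrArg (fun M => M j j) hUU'
    simp only [Matrix.mul_apply, Matrix.star_apply, Matrix.one_apply_eq] at h
    have : ((∑ i, w i j : ℝ) : ℂ) = 1 := by
      rw [← h]; push_cast
      exact Finset.sum_congr rfl fun i _ => Complex.normSq_eq_conj_mul_self
    exact_mod_cast this
  -- entrywise spectral theorem
  have hAe : ∀ i l, A i l = ∑ j, U i j * (lam j : ℂ) * (starRingEnd ℂ) (U l j) := by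
    intro i l
    conv_lhs => rw [hA.1.spectral_theorem]
    simp only [Unitary.conjStarAlgAut_apply, Matrix.mul_apply, Matrix.mul_diagonal, Matrix.star_apply, Matrix.diagonal_apply,
      Finset.sum_mul, RCLike.star_def]
    refine Finset.sum_congr rfl fun x _ => ?_
    rw [hUdef]
    simp [Matrix.IsHermitian.eigenvectorUnitary_apply, Function.comp, hlamdef]
  -- diagonal entries
  have hdiag : ∀ i, A i i = ((∑ j, w i j * lam j : ℝ) : ℂ) := by
    intro i
    rw [hAe i i]
    push_cast
    refine Finset.sum_congr rfl fun j _ => ?_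
    rw [hwdef]
    rw [show U i j * (lam j : ℂ) * (starRingEnd ℂ) (U i j)
        = (lam j : ℂ) * (U i j * (starRingEnd ℂ) (U i j)) by ring, Complex.mul_conj]
    push_cast; ring
  have hdre : ∀ i, (A i i).re = ∑ j, w i j * lam j := by
    intro i; rw [hdiag i]; exact Complex.ofReal_re _
  -- from heq deduce equality of sums of p-th powers
  have hp0 : (0:ℝ) < p := by linarith
  have hsums : ∑ i, (A i i).re ^ p = ∑ i, lam i ^ p := by
    refine Real.rpow_left_injOn (x := 1/p) (one_div_ne_zero hp0.ne') ?_ ?_ heq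
    · exact Finset.sum_nonneg fun i _ => Real.rpow_nonneg
        (by rw [hdre]; exact Finset.sum_nonneg fun j _ =>
          mul_nonneg (Complex.normSq_nonneg _) (hlam0 j)) p
    · exact Finset.sum_nonneg fun i _ => Real.rpow_nonneg (hlam0 i) p
  -- Jensen per row
  have hle : ∀ i, (A i i).re ^ p ≤ ∑ j, w i j * lam j ^ p := by
    intro i
    rw [hdre i]
    exact Real.rpow_arith_mean_le_arith_mean_rpow Finset.univ (w i) lam
      (fun j _ => Complex.normSq_nonneg _) (hrow i) (fun j _ => hlam0 j) hp.le
  have htot : ∑ i, ∑ j, w i j * lam j ^ p = ∑ j, lam j ^ p := by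
    rw [Finset.sum_comm]
    refine Finset.sum_congr rfl fun j _ => ?_
    rw [← Finset.sum_mul, hcol j, one_mul]
  -- per-row equality
  have heach : ∀ i, (A i i).re ^ p = ∑ j, w i j * lam j ^ p := by
    have := (Finset.sum_eq_sum_iff_of_le (fun i (_ : i ∈ Finset.univ) => hle i)).mp
      (by rw [hsums, ← htot])
    exact fun i => this i (Finset.mem_univ i)
  -- equality case of Jensen
  have hkey : ∀ i j, U i j ≠ 0 → (lam j : ℂ) = A i i := by
    intro i j hUij
    have hw' : w i j ≠ 0 := fun h => hUij (Complex.normSq_eq_zero.mp h)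
    have := ((strictConvexOn_rpow hp).map_sum_eq_iff'
      (w := w i) (p := lam) (t := Finset.univ)
      (fun j _ => Complex.normSq_nonneg _) (hrow i) (fun j _ => hlam0 j)).mp ?_ j
      (Finset.mem_univ j) hw'
    · rw [hdiag i, this]
      push_cast
      simp [smul_eq_mul]
    · have h := heach i
      rw [hdre i] at h
      simpa [smul_eq_mul] using h
  -- conclude diagonality
  intro i l hil
  rw [hAe i l]
  have hz : ∑ j, U i j * (starRingEnd ℂ) (U l j) = 0 := by
    have h := congrArg (fun M => M i l) hUU
    simpa [Matrix.mul_apply, Matrix.star_apply, Matrix.one_apply, hil,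
      RCLike.star_def] using h
  calc ∑ j, U i j * (lam j : ℂ) * (starRingEnd ℂ) (U l j)
      = ∑ j, A i i * (U i j * (starRingEnd ℂ) (U l j)) := by
        refine Finset.sum_congr rfl fun j _ => ?_
        by_cases h : U i j = 0
        · simp [h]
        · rw [← hkey i j h]; ring
    _ = A i i * ∑ j, U i j * (starRingEnd ℂ) (U l j) := by rw [Finset.mul_sum]
    _ = 0 := by rw [hz, mul_zero]
end

section
/- Let ρ be a k×k density matrix (positive semidefinite with trace 1). Then its von Neumann entropy satisfies S(ρ) ≥ log k − k · ‖ρ − I_k/k‖_2², where ‖·‖_2 is the Hilbert–Schmidt norm and S(ρ) = −Tr(ρ log ρ). -/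
open Matrix ComplexOrder

/-- Scalar inequality: for `0 ≤ x`, `x * log x + x * log k ≤ k * x ^ 2 - x`. -/
lemma aux_term_ineq {k : ℕ} (hk : 0 < k) {x : ℝ} (hx : 0 ≤ x) :
    x * Real.log x + x * Real.log k ≤ k * x ^ 2 - x := by
  rcases eq_or_lt_of_le hx with h | h
  · simp [← h]
  · have hkx : 0 < (k : ℝ) * x := by positivity
    have hlog : Real.log ((k : ℝ) * x) ≤ (k : ℝ) * x - 1 :=
      Real.log_le_sub_one_of_pos hkx
    have hklog : Real.log ((k : ℝ) * x) = Real.log k + Real.log x := by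
      rw [Real.log_mul (by positivity) (ne_of_gt h)]
    nlinarith [mul_le_mul_of_nonneg_left hlog hx]

theorem stmt15 {k : ℕ} (ρ : Matrix (Fin k) (Fin k) ℂ)
    (hρ : ρ.PosSemidef) (htr : ρ.trace = 1) :
    Real.log k - k * ∑ i, ∑ j, ‖(ρ - (k : ℂ)⁻¹ • 1) i j‖ ^ 2 ≤
      -∑ i, hρ.1.eigenvalues i * Real.log (hρ.1.eigenvalues i) := by
  classical
  rcases Nat.eq_zero_or_pos k with hk | hk
  · subst hk
    simp [Matrix.trace] at htr
  have hkR : (0 : ℝ) < k := by exact_mod_cast hk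
  have hkC : (k : ℂ) ≠ 0 := by exact_mod_cast hkR.ne'
  set μ : Fin k → ℝ := hρ.1.eigenvalues with hμdef
  have hμ0 : ∀ i, 0 ≤ μ i := hρ.eigenvalues_nonneg
  set U : Matrix (Fin k) (Fin k) ℂ := (hρ.1.eigenvectorUnitary : Matrix (Fin k) (Fin k) ℂ) with hUdef
  have hUmem := hρ.1.eigenvectorUnitary.2
  have hUstar : star U * U = 1 := Matrix.mem_unitaryGroup_iff'.mp hUmem
  have hUstar' : U * star U = 1 := Matrix.mem_unitaryGroup_iff.mp hUmem
  set D : Matrix (Fin k) (Fin k) ℂ := diagonal (Complex.ofReal ∘ μ) with hDdef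
  have hspec : ρ = U * D * star U := hρ.1.spectral_theorem
  -- trace facts
  have htrD : D.trace = ∑ i, (μ i : ℂ) := by simp [hDdef, Matrix.trace_diagonal]
  have htrρ : ρ.trace = ∑ i, (μ i : ℂ) := by
    rw [hspec, Matrix.trace_mul_comm, ← Matrix.mul_assoc, hUstar, Matrix.one_mul, htrD]
  have hsumμ : ∑ i, μ i = 1 := by
    have : ((∑ i, μ i : ℝ) : ℂ) = 1 := by push_cast; rw [← htrρ, htr]
    exact_mod_cast this
  have htrρ2 : (ρ * ρ).trace = ∑ i, ((μ i : ℂ)) ^ 2 := by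
    have : ρ * ρ = U * (D * D) * star U := by
      rw [hspec]
      rw [show U * D * star U * (U * D * star U) = U * D * (star U * U) * D * star U by
        noncomm_ring]
      rw [hUstar]
      noncomm_ring
    rw [this, Matrix.trace_mul_comm, ← Matrix.mul_assoc, hUstar, Matrix.one_mul, hDdef,
      Matrix.diagonal_mul_diagonal, Matrix.trace_diagonal]
    simp [sq]
  -- the Frobenius norm computation
  set A : Matrix (Fin k) (Fin k) ℂ := ρ - (k : ℂ)⁻¹ • 1 with hAdef
  have hAherm : Aᴴ = A := by
    simp [hAdef, Matrix.conjTranspose_sub, Matrix.conjTranspose_smul, hρ.1.eq,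
      Complex.star_def, Complex.conj_ofReal]
  have hAtrace : ((∑ i, ∑ j, ‖A i j‖ ^ 2 : ℝ) : ℂ) = (A * A).trace := by
    rw [Matrix.trace]
    push_cast
    refine Finset.sum_congr rfl fun i _ => ?_
    rw [Matrix.diag, Matrix.mul_apply]
    refine Finset.sum_congr rfl fun j _ => ?_
    have hconj : A j i = starRingEnd ℂ (A i j) := by
      conv_lhs => rw [← hAherm]
      simp [Matrix.conjTranspose_apply]
    rw [hconj, Complex.mul_conj]
    norm_cast
    exact Complex.sq_norm _
  have htrAA : (A * A).trace = ∑ i, ((μ i : ℂ)) ^ 2 - (k : ℂ)⁻¹ := by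
    have hexp : A * A = ρ * ρ - (k : ℂ)⁻¹ • ρ - (k : ℂ)⁻¹ • ρ
        + ((k : ℂ)⁻¹ * (k : ℂ)⁻¹) • (1 : Matrix (Fin k) (Fin k) ℂ) := by
      simp only [hAdef]
      rw [Matrix.sub_mul, Matrix.mul_sub, Matrix.mul_sub]
      simp only [Matrix.smul_mul, Matrix.mul_smul, Matrix.one_mul, Matrix.mul_one, smul_smul]
      abel
    rw [hexp]
    simp only [Matrix.trace_add, Matrix.trace_sub, Matrix.trace_smul, htr, htrρ2,
      Matrix.trace_one]
    have : (Fintype.card (Fin k) : ℂ) = (k : ℂ) := by simp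
    rw [this]
    field_simp
    simp only [smul_eq_mul]
    field_simp
    ring
  have hS : ∑ i, ∑ j, ‖A i j‖ ^ 2 = ∑ i, (μ i) ^ 2 - (k : ℝ)⁻¹ := by
    have : ((∑ i, ∑ j, ‖A i j‖ ^ 2 : ℝ) : ℂ)
        = ((∑ i, (μ i) ^ 2 - (k : ℝ)⁻¹ : ℝ) : ℂ) := by
      rw [hAtrace, htrAA]; push_cast; ring
    exact_mod_cast this
  rw [hS]
  -- now a purely real inequality
  have hterm : ∀ i ∈ Finset.univ, μ i * Real.log (μ i) + μ i * Real.log k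
      ≤ (k : ℝ) * (μ i) ^ 2 - μ i :=
    fun i _ => aux_term_ineq hk (hμ0 i)
  have hsum := Finset.sum_le_sum hterm
  rw [Finset.sum_add_distrib, ← Finset.sum_mul, hsumμ, one_mul, Finset.sum_sub_distrib,
    ← Finset.mul_sum, hsumμ] at hsum
  have hkinv : (k : ℝ) * (∑ i, (μ i) ^ 2 - (k : ℝ)⁻¹) = (k : ℝ) * ∑ i, (μ i) ^ 2 - 1 := by
    field_simp
  linarith
end

section
/- Let σ be a density matrix on ℂ^k ⊗ ℂ^k (dimension k² ≥ 4) and b ∈ ℂ^k ⊗ ℂ^k a unit vector such that ⟨b|σ|b⟩ ≥ 1/k. Then the von Neumann entropy of σ satisfies S(σ) < 2 log k − (log k)/k + 2/k. -/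
open Matrix ComplexOrder

private lemma gibbs_pointwise {x q : ℝ} (hx : 0 ≤ x) (hq : 0 < q) :
    x - q ≤ x * Real.log x - x * Real.log q := by
  rcases eq_or_lt_of_le hx with h | h
  · simp [← h]; positivity
  · have h1 : Real.log (q / x) ≤ q / x - 1 := Real.log_le_sub_one_of_pos (by positivity)
    have h2 : Real.log (q / x) = Real.log q - Real.log x :=
      Real.log_div (ne_of_gt hq) (ne_of_gt h)
    have h3 : x * (Real.log q - Real.log x) ≤ x * (q / x - 1) :=
      mul_le_mul_of_nonneg_left (h2 ▸ h1) hx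
    have h4 : x * (q / x - 1) = q - x := by field_simp
    nlinarith

theorem stmt16 {k : ℕ} (hk : 2 ≤ k)
    (σ : Matrix (Fin k × Fin k) (Fin k × Fin k) ℂ)
    (hσ : σ.PosSemidef) (htr : σ.trace = 1)
    (b : Fin k × Fin k → ℂ) (hb : ∑ i, ‖b i‖ ^ 2 = 1)
    (hbσ : (1 : ℝ) / k ≤ (star b ⬝ᵥ σ.mulVec b).re) :
    -∑ i, hσ.1.eigenvalues i * Real.log (hσ.1.eigenvalues i) <
      2 * Real.log k - Real.log k / k + 2 / k := by
  have hH := hσ.1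
  have hk0 : (0:ℝ) < (k:ℝ) := by positivity
  have hkr : (2:ℝ) ≤ (k:ℝ) := by exact_mod_cast hk
  set lam := hH.eigenvalues with hlam
  have hnn : ∀ i, 0 ≤ lam i := hσ.eigenvalues_nonneg
  have hsum : ∑ i, lam i = 1 := by
    have h1 : σ.trace = ∑ i, (lam i : ℂ) := by
      nth_rewrite 1 [hH.spectral_theorem]
      rw [Unitary.conjStarAlgAut_apply, Matrix.trace_mul_cycle,
        Matrix.mem_unitaryGroup_iff'.mp (hH.eigenvectorUnitary).2, Matrix.one_mul,
        Matrix.trace_diagonal]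
      rfl
    rw [htr] at h1
    exact_mod_cast h1.symm
  set U : Matrix (Fin k × Fin k) (Fin k × Fin k) ℂ := ↑hH.eigenvectorUnitary with hU
  set c := star U *ᵥ b with hc
  have hcb : star b ᵥ* U = star c := by
    rw [hc, star_mulVec, ← Matrix.star_eq_conjTranspose, star_star]
  have hdots : ∀ v : Fin k × Fin k → ℂ, star v ⬝ᵥ v = ∑ i, ((‖v i‖ : ℂ))^2 := by
    intro v
    rw [dotProduct]
    congr 1; funext i
    rw [Pi.star_apply, ← Complex.ofReal_pow, Complex.sq_norm,
      Complex.normSq_eq_conj_mul_self]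
    rfl
  have hdot : star b ⬝ᵥ σ.mulVec b = ∑ i, (lam i : ℂ) * (‖c i‖ : ℂ)^2 := by
    nth_rewrite 1 [hH.spectral_theorem]
    rw [Unitary.conjStarAlgAut_apply]
    rw [← Matrix.mulVec_mulVec, Matrix.dotProduct_mulVec, ← Matrix.vecMul_vecMul, hcb]
    rw [dotProduct]
    congr 1; funext i
    rw [Matrix.vecMul_diagonal]
    have habs : ((‖c i‖):ℂ)^2 = star (c i) * c i := by
      rw [← Complex.ofReal_pow, Complex.sq_norm, Complex.normSq_eq_conj_mul_self]; rfl
    rw [habs]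
    simp only [Function.comp_apply, Pi.star_apply, ← hc, RCLike.ofReal, Complex.coe_algebraMap]
    ring
  have hcsum : ∑ i, ‖c i‖ ^ 2 = 1 := by
    have e1 : star c ⬝ᵥ c = star b ⬝ᵥ b := by
      rw [hc, ← hcb, Matrix.dotProduct_mulVec, Matrix.vecMul_vecMul,
        Matrix.mem_unitaryGroup_iff.mp (hH.eigenvectorUnitary).2, Matrix.vecMul_one]
    rw [hdots c, hdots b] at e1
    have e2 : (∑ i, ((‖b i‖ : ℂ))^2) = ((1:ℝ) : ℂ) := by
      rw [← hb]; push_cast; rfl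
    rw [e2] at e1
    exact_mod_cast e1
  have hre : (star b ⬝ᵥ σ.mulVec b).re = ∑ i, lam i * ‖c i‖ ^ 2 := by
    rw [hdot]
    have : (∑ i, (lam i : ℂ) * (‖c i‖ : ℂ)^2)
        = (((∑ i, lam i * ‖c i‖ ^ 2 : ℝ)) : ℂ) := by push_cast; rfl
    rw [this, Complex.ofReal_re]
  -- a maximal eigenvalue
  have hne : Finset.univ.Nonempty (α := Fin k × Fin k) := by
    refine ⟨(⟨0, by omega⟩, ⟨0, by omega⟩), Finset.mem_univ _⟩
  obtain ⟨i₀, -, hmax⟩ := Finset.exists_max_image Finset.univ lam hne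
  set p := lam i₀ with hp
  have hpk : 1 / (k:ℝ) ≤ p := by
    have h1 : ∑ i, lam i * ‖c i‖ ^ 2 ≤ ∑ i, p * ‖c i‖ ^ 2 :=
      Finset.sum_le_sum fun i _ =>
        mul_le_mul_of_nonneg_right (hmax i (Finset.mem_univ i)) (by positivity)
    rw [← Finset.mul_sum, hcsum, mul_one] at h1
    rw [hre] at hbσ
    linarith
  have hp1 : p ≤ 1 := hsum ▸ Finset.single_le_sum (fun i _ => hnn i) (Finset.mem_univ i₀)
  -- the comparison distribution
  set q : Fin k × Fin k → ℝ := fun i => if i = i₀ then 1/(k:ℝ) else 1/((k:ℝ)*(k+1)) with hqdef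
  have hq0 : ∀ i, 0 < q i := by
    intro i; by_cases h : i = i₀ <;> simp [hqdef, h] <;> positivity
  have hcard : (Finset.univ.erase i₀).card = k * k - 1 := by
    rw [Finset.card_erase_of_mem (Finset.mem_univ _), Finset.card_univ]
    simp [Fintype.card_prod]
  have hk2 : 1 ≤ k * k := by nlinarith
  have hqsum : ∑ i, q i = 1 := by
    rw [← Finset.add_sum_erase _ q (Finset.mem_univ i₀)]
    have e1 : q i₀ = 1/(k:ℝ) := by simp [hqdef]
    have e2 : ∑ i ∈ Finset.univ.erase i₀, q i = ((k*k - 1 : ℕ) : ℝ) * (1/((k:ℝ)*(k+1))) := by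
      rw [Finset.sum_congr rfl (fun i hi => by
        simp only [hqdef]; rw [if_neg (Finset.ne_of_mem_erase hi)]), Finset.sum_const, hcard,
        nsmul_eq_mul]
    rw [e1, e2]
    have : ((k*k - 1 : ℕ) : ℝ) = (k:ℝ)*(k:ℝ) - 1 := by
      push_cast [Nat.cast_sub hk2]; ring
    rw [this]
    field_simp
    ring
  have herase : ∑ i ∈ Finset.univ.erase i₀, lam i = 1 - p := by
    have := Finset.add_sum_erase Finset.univ lam (Finset.mem_univ i₀)
    rw [hsum] at this; linarith
  have hgibbs : -∑ i, lam i * Real.log (lam i) ≤ -∑ i, lam i * Real.log (q i) := by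
    have h := Finset.sum_le_sum (fun i (_ : i ∈ Finset.univ) => gibbs_pointwise (hnn i) (hq0 i))
    rw [Finset.sum_sub_distrib, Finset.sum_sub_distrib, hsum, hqsum] at h
    linarith
  have hqsplit : ∑ i, lam i * Real.log (q i)
      = p * Real.log (1/(k:ℝ)) + (1 - p) * Real.log (1/((k:ℝ)*(k+1))) := by
    rw [← Finset.add_sum_erase _ _ (Finset.mem_univ i₀)]
    congr 1
    · simp [hqdef, hp]
    · rw [Finset.sum_congr rfl (fun i hi => by
        simp only [hqdef]; rw [if_neg (Finset.ne_of_mem_erase hi)]), ← Finset.sum_mul, herase]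
  -- final arithmetic
  set L := Real.log (k:ℝ) with hL
  set M := Real.log ((k:ℝ)+1) with hM
  have hlogmul : Real.log ((k:ℝ)*(k+1)) = L + M := Real.log_mul (by positivity) (by positivity)
  have hbound : -∑ i, lam i * Real.log (q i) = p * L + (1 - p) * (L + M) := by
    rw [hqsplit, one_div, one_div, Real.log_inv, Real.log_inv, hlogmul]
    ring
  have hL0 : 0 ≤ L := Real.log_nonneg (by linarith)
  have hM0 : 0 ≤ M := Real.log_nonneg (by linarith)
  have hMLlt : M - L < 1/(k:ℝ) := by
    have h1 : Real.log (((k:ℝ)+1)/(k:ℝ)) < ((k:ℝ)+1)/(k:ℝ) - 1 :=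
      Real.log_lt_sub_one_of_pos (by positivity) (by
        intro h
        rw [div_eq_one_iff_eq (by positivity : (k:ℝ) ≠ 0)] at h
        linarith)
    have h2 : Real.log (((k:ℝ)+1)/(k:ℝ)) = M - L := Real.log_div (by positivity) (by positivity)
    have h3 : ((k:ℝ)+1)/(k:ℝ) - 1 = 1/(k:ℝ) := by field_simp; ring
    linarith
  have hML0 : 0 ≤ M - L := by
    have := Real.log_le_log (by positivity : (0:ℝ) < (k:ℝ)) (by linarith : (k:ℝ) ≤ (k:ℝ)+1)
    linarith
  set t := 1/(k:ℝ) with ht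
  have ht0 : 0 < t := by positivity
  have hLk : L / (k:ℝ) = L * t := by rw [ht]; ring
  have h2k : 2 / (k:ℝ) = 2 * t := by rw [ht]; ring
  have hfinal : p * L + (1 - p) * (L + M) < 2 * L - L / (k:ℝ) + 2 / (k:ℝ) := by
    rw [hLk, h2k]
    nlinarith [mul_nonneg (sub_nonneg.2 hpk) hM0, mul_nonneg ht0.le hML0]
  calc -∑ i, lam i * Real.log (lam i) ≤ -∑ i, lam i * Real.log (q i) := hgibbs
    _ = p * L + (1 - p) * (L + M) := hbound
    _ < _ := hfinal
end
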